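/- If A_u has all eigenvalues of modulus strictly greater than 1 and A_s has all eigenvalues of modulus strictly less than 1 and is invertible, then the matrix L = A + Q(A')^{-1}Y_∞ of the State-Secrecy Code has all eigenvalues of modulus strictly greater than 1; consequently, L^{-1} has spectral radius strictly less than 1. -/

import Mathlib

open Matrix

section Helpers
open Polynomial

theorem mem_spectrum_iff_root' {K : Type*} [Field K] {m : Type*} [Fintype m] [DecidableEq m]
    (M : Matrix m m K) (μ : K) : μ ∈ spectrum K M ↔ M.charpoly.eval μ = 0 := by
  have halg : algebraMap K (Matrix m m K) μ = Matrix.scalar m μ := by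
    ext i j; simp [Matrix.algebraMap_eq_diagonal, Matrix.scalar]
  rw [spectrum.mem_iff, Matrix.charpoly, _root_.eval_det, matPolyEquiv_charmatrix,
    eval_sub, eval_X, eval_C, halg, Matrix.isUnit_iff_isUnit_det, isUnit_iff_ne_zero, not_ne_iff]

theorem spectrum_fromBlocks' {K : Type*} [Field K] {p q : Type*}
    [Fintype p] [DecidableEq p] [Fintype q] [DecidableEq q]
    (A : Matrix p p K) (B : Matrix p q K) (D : Matrix q q K) :
    spectrum K (fromBlocks A B 0 D) = spectrum K A ∪ spectrum K D := by
  ext μ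
  rw [Set.mem_union, mem_spectrum_iff_root', mem_spectrum_iff_root', mem_spectrum_iff_root',
    Matrix.charpoly_fromBlocks_zero₂₁, eval_mul, mul_eq_zero]

theorem spectrum_transpose' {K : Type*} [Field K] {m : Type*} [Fintype m] [DecidableEq m]
    (M : Matrix m m K) : spectrum K Mᵀ = spectrum K M := by
  ext μ
  rw [spectrum.mem_iff, spectrum.mem_iff, not_iff_not, Matrix.isUnit_iff_isUnit_det,
    Matrix.isUnit_iff_isUnit_det]
  have h : algebraMap K (Matrix m m K) μ - Mᵀ = (algebraMap K (Matrix m m K) μ - M)ᵀ := by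
    rw [transpose_sub]
    congr 1
    simp [Matrix.algebraMap_eq_diagonal]
  rw [h, Matrix.det_transpose]

/-- The complexification of an invertible real matrix, as a unit. -/
noncomputable def matUnit {m : Type*} [Fintype m] [DecidableEq m]
    (M : Matrix m m ℝ) (h : IsUnit M.det) : (Matrix m m ℂ)ˣ where
  val := M.map (algebraMap ℝ ℂ)
  inv := M⁻¹.map (algebraMap ℝ ℂ)
  val_inv := by
    rw [← Matrix.map_mul, Matrix.mul_nonsing_inv _ h,
      Matrix.map_one _ (map_zero _) (map_one _)]
  inv_val := by
    rw [← Matrix.map_mul, Matrix.nonsing_inv_mul _ h,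
      Matrix.map_one _ (map_zero _) (map_one _)]

theorem spec_inv_real {m : Type*} [Fintype m] [DecidableEq m]
    (M : Matrix m m ℝ) (h : IsUnit M.det) {μ : ℂ}
    (hμ : μ ∈ spectrum ℂ (M⁻¹.map (algebraMap ℝ ℂ))) :
    μ ≠ 0 ∧ μ⁻¹ ∈ spectrum ℂ (M.map (algebraMap ℝ ℂ)) := by
  set u := matUnit M h with hu
  have hval : M⁻¹.map (algebraMap ℝ ℂ) = ((u⁻¹ : (Matrix m m ℂ)ˣ) : Matrix m m ℂ) := rfl
  rw [hval] at hμ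
  have hne : μ ≠ 0 := spectrum.ne_zero_of_mem_of_unit hμ
  refine ⟨hne, ?_⟩
  have h2 := (spectrum.inv_mem_iff (r := Units.mk0 μ hne) (a := u⁻¹)).mp hμ
  rw [inv_inv] at h2
  exact h2

theorem isUnit_det_of_antispec {m : Type*} [Fintype m] [DecidableEq m]
    (M : Matrix m m ℝ) (h : ∀ μ ∈ spectrum ℂ (M.map (algebraMap ℝ ℂ)), 1 < ‖μ‖) :
    IsUnit M.det := by
  by_contra hcon
  rw [isUnit_iff_ne_zero, not_ne_iff] at hcon
  have h0 : (0 : ℂ) ∈ spectrum ℂ (M.map (algebraMap ℝ ℂ)) := by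
    rw [spectrum.zero_mem_iff, Matrix.isUnit_iff_isUnit_det]
    have hd : (M.map (algebraMap ℝ ℂ)).det = 0 := by
      rw [← RingHom.mapMatrix_apply, ← RingHom.map_det, hcon, map_zero]
    simp only [isUnit_iff_ne_zero, not_ne_iff]
    exact hd
  have := h 0 h0
  norm_num at this

theorem norm_gt_of_inv_lt {μ : ℂ} (hne : μ ≠ 0) (hlt : ‖μ⁻¹‖ < 1) : 1 < ‖μ‖ := by
  have h1 : ‖μ⁻¹‖ * ‖μ‖ = 1 := by rw [← norm_mul, inv_mul_cancel₀ hne, norm_one]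
  nlinarith [norm_nonneg μ, norm_nonneg μ⁻¹]

theorem norm_lt_of_inv_gt {μ : ℂ} (hne : μ ≠ 0) (hlt : 1 < ‖μ⁻¹‖) : ‖μ‖ < 1 := by
  have h1 : ‖μ⁻¹‖ * ‖μ‖ = 1 := by rw [← norm_mul, inv_mul_cancel₀ hne, norm_one]
  nlinarith [norm_nonneg μ, norm_nonneg μ⁻¹]

end Helpers

/-- `A` is Schur stable: all (complex) eigenvalues have modulus `< 1`. -/
def SchurStable {m : Type*} [Fintype m] [DecidableEq m]
    (A : Matrix m m ℝ) : Prop :=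
  ∀ μ ∈ spectrum ℂ (A.map (algebraMap ℝ ℂ)), ‖μ‖ < 1

/-- `A` is antistable: all (complex) eigenvalues have modulus `> 1`. -/
def Antistable {m : Type*} [Fintype m] [DecidableEq m]
    (A : Matrix m m ℝ) : Prop :=
  ∀ μ ∈ spectrum ℂ (A.map (algebraMap ℝ ℂ)), 1 < ‖μ‖

/-- All eigenvalues of the State-Secrecy Code weighting matrix `L` have
modulus `> 1`; consequently `L⁻¹` has spectral radius `< 1`. -/
theorem ssc_weighting_matrix_antistable {nu ns : ℕ}
    (Au : Matrix (Fin nu) (Fin nu) ℝ)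
    (As Qs PsInf : Matrix (Fin ns) (Fin ns) ℝ)
    (Qu : Matrix (Fin nu) (Fin nu) ℝ)
    (Q12 : Matrix (Fin nu) (Fin ns) ℝ)
    (hAu : Antistable Au) (hAs : IsUnit As.det) (hAsStable : SchurStable As)
    (hQ : (fromBlocks Qu Q12 Q12ᵀ Qs).PosDef)
    (hQsymm : (fromBlocks Qu Q12 Q12ᵀ Qs).IsSymm)
    (hPsInf : PsInf.PosDef) (hLyap : PsInf = As * PsInf * Asᵀ + Qs) :
    Antistable
      (fromBlocks Au 0 0 As +
        fromBlocks Qu Q12 Q12ᵀ Qs * ((fromBlocks Au 0 0 As)ᵀ)⁻¹ *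
          fromBlocks 0 0 0 PsInf⁻¹) ∧
    SchurStable
      (fromBlocks Au 0 0 As +
        fromBlocks Qu Q12 Q12ᵀ Qs * ((fromBlocks Au 0 0 As)ᵀ)⁻¹ *
          fromBlocks 0 0 0 PsInf⁻¹)⁻¹ := by
  have hAuDet : IsUnit Au.det := isUnit_det_of_antispec Au hAu
  have hAuT : IsUnit Auᵀ.det := by rwa [Matrix.det_transpose]
  have hAsT : IsUnit Asᵀ.det := by rwa [Matrix.det_transpose]
  have hPDet : IsUnit PsInf.det := hPsInf.det_pos.ne'.isUnit
  -- block computation for the inverse of the transpose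
  have hATinv : ((fromBlocks Au 0 0 As)ᵀ)⁻¹ = fromBlocks (Auᵀ)⁻¹ 0 0 (Asᵀ)⁻¹ := by
    rw [fromBlocks_transpose, transpose_zero, transpose_zero]
    apply inv_eq_right_inv
    rw [fromBlocks_multiply]
    simp [Matrix.mul_nonsing_inv _ hAuT, Matrix.mul_nonsing_inv _ hAsT, ← fromBlocks_one]
  set Ls : Matrix (Fin ns) (Fin ns) ℝ := As + Qs * ((Asᵀ)⁻¹ * PsInf⁻¹) with hLsdef
  have hL : (fromBlocks Au 0 0 As +
        fromBlocks Qu Q12 Q12ᵀ Qs * ((fromBlocks Au 0 0 As)ᵀ)⁻¹ *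
          fromBlocks 0 0 0 PsInf⁻¹)
      = fromBlocks Au (Q12 * ((Asᵀ)⁻¹ * PsInf⁻¹)) 0 Ls := by
    rw [hATinv, fromBlocks_multiply, fromBlocks_multiply, fromBlocks_add]
    simp [hLsdef, Matrix.mul_assoc]
  -- Ls is similar to (Asᵀ)⁻¹
  have hQsEq : Qs = PsInf - As * PsInf * Asᵀ :=
    eq_sub_of_add_eq (by rw [add_comm]; exact hLyap.symm)
  have hLsSim : Ls = PsInf * ((Asᵀ)⁻¹ * PsInf⁻¹) := by
    rw [hLsdef, hQsEq, Matrix.sub_mul]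
    have h1 : As * PsInf * Asᵀ * ((Asᵀ)⁻¹ * PsInf⁻¹) = As := by
      rw [Matrix.mul_assoc (As * PsInf) Asᵀ, ← Matrix.mul_assoc Asᵀ,
        Matrix.mul_nonsing_inv _ hAsT, Matrix.one_mul, Matrix.mul_assoc,
        Matrix.mul_nonsing_inv _ hPDet, Matrix.mul_one]
    rw [h1]; abel
  have hLsInvP : PsInf * ((Asᵀ)⁻¹ * PsInf⁻¹) = PsInf * (Asᵀ)⁻¹ * PsInf⁻¹ := by
    rw [Matrix.mul_assoc]
  -- part 1 : Antistable L
  have part1 : Antistable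
      (fromBlocks Au 0 0 As +
        fromBlocks Qu Q12 Q12ᵀ Qs * ((fromBlocks Au 0 0 As)ᵀ)⁻¹ *
          fromBlocks 0 0 0 PsInf⁻¹) := by
    intro μ hμ
    rw [hL] at hμ
    have hmap : (fromBlocks Au (Q12 * ((Asᵀ)⁻¹ * PsInf⁻¹)) 0 Ls).map (algebraMap ℝ ℂ)
        = fromBlocks (Au.map (algebraMap ℝ ℂ))
            ((Q12 * ((Asᵀ)⁻¹ * PsInf⁻¹)).map (algebraMap ℝ ℂ)) 0
            (Ls.map (algebraMap ℝ ℂ)) := by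
      rw [fromBlocks_map, Matrix.map_zero _ (map_zero _)]
    rw [hmap, spectrum_fromBlocks', Set.mem_union] at hμ
    rcases hμ with hμ | hμ
    · exact hAu μ hμ
    · -- μ ∈ spectrum of Ls, which is conjugate to (Asᵀ)⁻¹
      set uP := matUnit PsInf hPDet with huP
      have hconj : Ls.map (algebraMap ℝ ℂ)
          = (uP : Matrix (Fin ns) (Fin ns) ℂ) * ((Asᵀ)⁻¹.map (algebraMap ℝ ℂ)) *
            ((uP⁻¹ : (Matrix (Fin ns) (Fin ns) ℂ)ˣ) : Matrix (Fin ns) (Fin ns) ℂ) := by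
        rw [hLsSim, hLsInvP, Matrix.map_mul, Matrix.map_mul]
        rfl
      rw [hconj, spectrum.units_conjugate] at hμ
      obtain ⟨hne, hinv⟩ := spec_inv_real Asᵀ hAsT hμ
      rw [Matrix.transpose_map, spectrum_transpose'] at hinv
      exact norm_gt_of_inv_lt hne (hAsStable _ hinv)
  refine ⟨part1, ?_⟩
  -- part 2 : SchurStable L⁻¹
  intro μ hμ
  have hLdet := isUnit_det_of_antispec _ part1
  obtain ⟨hne, hinv⟩ := spec_inv_real _ hLdet hμ
  exact norm_lt_of_inv_gt hne (part1 _ hinv)
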